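/- If there exists an acyclic charging scheme of value v from G to a spanning tree T, and e is an edge of G not in T, then there exists an acyclic charging scheme of value v from G − e to T. -/

import Mathlib

open scoped Classical
noncomputable section

/-- Weighted length of a walk: sum of edge weights with multiplicity. -/
def wlen {V : Type*} (w : Sym2 V → ℝ) {G : SimpleGraph V} {u v : V}
    (p : G.Walk u v) : ℝ :=
  (p.edges.map w).sum

/-- Weighted shortest-path distance: infimum of weighted lengths of walks. -/
def wdist {V : Type*} (G : SimpleGraph V) (w : Sym2 V → ℝ) (u v : V) : ℝ :=
  sInf {x : ℝ | ∃ p : G.Walk u v, wlen w p = x}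

/-- Total weight of a graph: sum of weights over its edge set. -/
def totalWeight {V : Type*} (G : SimpleGraph V) (w : Sym2 V → ℝ) : ℝ :=
  ∑ᶠ e ∈ G.edgeSet, w e

/-- `T` is a spanning tree of `G`. -/
def IsSpanningTree {V : Type*} (G T : SimpleGraph V) : Prop :=
  T ≤ G ∧ T.IsTree

/-- A detour in `G`: an edge `{u,v}` together with a path `P` from `v` to `u`
such that `e + P` is a simple cycle. -/
structure Detour {V : Type*} (G : SimpleGraph V) where
  u : V
  v : V
  adj : G.Adj u v
  path : G.Walk v u
  cyc : (SimpleGraph.Walk.cons adj path).IsCycle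

/-- The edge of a detour. -/
def Detour.edge {V : Type*} {G : SimpleGraph V} (d : Detour G) : Sym2 V :=
  s(d.u, d.v)

/-- Total charge going out of edge `e`. -/
def chargeOut {V : Type*} {G : SimpleGraph V} (x : Detour G → ℝ) (e : Sym2 V) : ℝ :=
  ∑ᶠ d ∈ {d : Detour G | d.edge = e}, x d

/-- Total charge coming into edge `e` (as part of detour paths). -/
def chargeIn {V : Type*} {G : SimpleGraph V} (x : Detour G → ℝ) (e : Sym2 V) : ℝ :=
  ∑ᶠ d ∈ {d : Detour G | e ∈ d.path.edges}, x d

/-- A charging scheme from `G` to `T` of value `v`. -/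
def IsChargingScheme {V : Type*} (G T : SimpleGraph V) (v : ℝ)
    (x : Detour G → ℝ) : Prop :=
  (∀ d, 0 ≤ x d) ∧
  (x.support.Finite) ∧
  (∀ e ∈ G.edgeSet, e ∉ T.edgeSet → 1 ≤ chargeOut x e) ∧
  (∀ e ∈ G.edgeSet, e ∉ T.edgeSet → chargeIn x e - chargeOut x e ≤ 0) ∧
  (∀ e ∈ T.edgeSet, chargeIn x e - chargeOut x e ≤ v)

/-- An acyclic charging scheme: additionally only non-tree edges charge, and
there is an edge ordering in which charging edges precede charged edges. -/
def IsAcyclicScheme {V : Type*} (G T : SimpleGraph V) (v : ℝ)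
    (x : Detour G → ℝ) : Prop :=
  IsChargingScheme G T v x ∧
  (∀ d : Detour G, x d ≠ 0 → d.edge ∉ T.edgeSet) ∧
  (∃ ord : Sym2 V → ℕ, ∀ d : Detour G, x d ≠ 0 →
    ∀ e ∈ d.path.edges, ord d.edge < ord e)

open SimpleGraph

lemma Detour.path_isPath {V : Type*} {G : SimpleGraph V} (d : Detour G) :
    d.path.IsPath := ((Walk.cons_isCycle_iff d.path d.adj).mp d.cyc).1

lemma Detour.edge_not_mem_path {V : Type*} {G : SimpleGraph V} (d : Detour G) :
    d.edge ∉ d.path.edges := ((Walk.cons_isCycle_iff d.path d.adj).mp d.cyc).2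

lemma detour_lift {V : Type*} {G : SimpleGraph V} {e : Sym2 V} (d : Detour G)
    (h1 : e ∉ d.path.edges) (h2 : d.edge ≠ e) :
    ∃ d' : Detour (G.deleteEdges {e}), d'.edge = d.edge ∧ d'.path.edges = d.path.edges := by
  have hP : ∀ f ∈ d.path.edges, f ∈ (G.deleteEdges {e}).edgeSet := by
    intro f hf
    rw [edgeSet_deleteEdges]
    exact ⟨d.path.edges_subset_edgeSet hf, fun hfe => h1 (Set.mem_singleton_iff.mp hfe ▸ hf)⟩
  refine ⟨⟨d.u, d.v, deleteEdges_adj.mpr ⟨d.adj, by simpa [Detour.edge] using h2⟩,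
    d.path.transfer _ hP, ?_⟩, rfl, d.path.edges_transfer hP⟩
  rw [Walk.cons_isCycle_iff]
  exact ⟨d.path_isPath.transfer hP, by rw [d.path.edges_transfer hP]; exact d.edge_not_mem_path⟩

lemma replace_walk {V : Type*} {G : SimpleGraph V} {e : Sym2 V} (de : Detour G)
    (hde : de.edge = e) {a b : V} (p : G.Walk a b) :
    ∃ q : (G.deleteEdges {e}).Walk a b,
      ∀ f ∈ q.edges, (f ∈ p.edges ∧ f ≠ e) ∨ f ∈ de.path.edges := by
  have hQedges : ∀ f ∈ de.path.edges, f ∈ (G.deleteEdges {e}).edgeSet := by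
    intro f hf
    rw [edgeSet_deleteEdges]
    refine ⟨de.path.edges_subset_edgeSet hf, fun hfe => ?_⟩
    exact de.edge_not_mem_path ((hde.symm ▸ Set.mem_singleton_iff.mp hfe : f = de.edge) ▸ hf)
  let Q : (G.deleteEdges {e}).Walk de.u de.v := (de.path.transfer _ hQedges).reverse
  have hQ : ∀ f ∈ Q.edges, f ∈ de.path.edges := by
    intro f hf
    rw [Walk.edges_reverse, List.mem_reverse, de.path.edges_transfer hQedges] at hf
    exact hf
  induction p with
  | nil => exact ⟨Walk.nil, by simp⟩
  | @cons u w b h p ih =>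
    obtain ⟨q, hq⟩ := ih
    by_cases hfe : s(u, w) = e
    · have huv : s(u, w) = s(de.u, de.v) := hfe.trans hde.symm
      rcases Sym2.eq_iff.mp huv with ⟨h1, h2⟩ | ⟨h1, h2⟩
      · refine ⟨(Q.copy h1.symm h2.symm).append q, ?_⟩
        intro f hf
        rw [Walk.edges_append, List.mem_append, Walk.edges_copy] at hf
        rcases hf with hf | hf
        · exact Or.inr (hQ f hf)
        · rcases hq f hf with ⟨hf1, hf2⟩ | hf'
          · exact Or.inl ⟨List.mem_cons_of_mem _ hf1, hf2⟩
          · exact Or.inr hf'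
      · refine ⟨(Q.reverse.copy h1.symm h2.symm).append q, ?_⟩
        intro f hf
        rw [Walk.edges_append, List.mem_append, Walk.edges_copy, Walk.edges_reverse,
          List.mem_reverse] at hf
        rcases hf with hf | hf
        · exact Or.inr (hQ f hf)
        · rcases hq f hf with ⟨hf1, hf2⟩ | hf'
          · exact Or.inl ⟨List.mem_cons_of_mem _ hf1, hf2⟩
          · exact Or.inr hf'
    · refine ⟨Walk.cons (deleteEdges_adj.mpr ⟨h, by simpa using hfe⟩) q, ?_⟩
      intro f hf
      rw [Walk.edges_cons, List.mem_cons] at hf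
      rcases hf with hf | hf
      · subst hf; exact Or.inl ⟨List.mem_cons_self, hfe⟩
      · rcases hq f hf with ⟨hf1, hf2⟩ | hf'
        · exact Or.inl ⟨List.mem_cons_of_mem _ hf1, hf2⟩
        · exact Or.inr hf'

lemma detour_shortcut {V : Type*} {G : SimpleGraph V} {e : Sym2 V} (d de : Detour G)
    (h1 : e ∈ d.path.edges) (hde : de.edge = e) (h3 : d.edge ∉ de.path.edges) :
    ∃ d' : Detour (G.deleteEdges {e}), d'.edge = d.edge ∧
      ∀ f ∈ d'.path.edges, f ∈ d.path.edges ∨ f ∈ de.path.edges := by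
  obtain ⟨q, hq⟩ := replace_walk de hde d.path
  have hne : d.edge ≠ e := fun h => d.edge_not_mem_path (h ▸ h1)
  refine ⟨⟨d.u, d.v, deleteEdges_adj.mpr ⟨d.adj, by simpa [Detour.edge] using hne⟩, q.bypass, ?_⟩, rfl, ?_⟩
  · rw [Walk.cons_isCycle_iff]
    refine ⟨q.bypass_isPath, fun hmem => ?_⟩
    rcases hq _ (q.edges_bypass_subset hmem) with ⟨hf, _⟩ | hf
    · exact d.edge_not_mem_path hf
    · exact h3 hf
  · intro f hf
    rcases hq _ (q.edges_bypass_subset hf) with ⟨hf', _⟩ | hf'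
    exacts [Or.inl hf', Or.inr hf']

def liftO {V : Type*} {G : SimpleGraph V} (e : Sym2 V) (d : Detour G) :
    Option (Detour (G.deleteEdges {e})) :=
  if h : e ∉ d.path.edges ∧ d.edge ≠ e then some (detour_lift d h.1 h.2).choose else none

lemma liftO_spec {V : Type*} {G : SimpleGraph V} {e : Sym2 V} {d : Detour G}
    {w : Detour (G.deleteEdges {e})} (h : liftO e d = some w) :
    w.edge = d.edge ∧ w.path.edges = d.path.edges ∧ e ∉ d.path.edges ∧ d.edge ≠ e := by
  unfold liftO at h
  split_ifs at h with hc
  · obtain ⟨h1, h2⟩ := (detour_lift d hc.1 hc.2).choose_spec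
    cases Option.some_inj.mp h
    exact ⟨h1, h2, hc.1, hc.2⟩

lemma liftO_some {V : Type*} {G : SimpleGraph V} {e : Sym2 V} {d : Detour G}
    (h1 : e ∉ d.path.edges) (h2 : d.edge ≠ e) : ∃ w, liftO e d = some w := by
  unfold liftO
  rw [dif_pos ⟨h1, h2⟩]
  exact ⟨_, rfl⟩

def shortO {V : Type*} {G : SimpleGraph V} (e : Sym2 V) (p : Detour G × Detour G) :
    Option (Detour (G.deleteEdges {e})) :=
  if h : e ∈ p.1.path.edges ∧ p.2.edge = e ∧ p.1.edge ∉ p.2.path.edges then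
    some (detour_shortcut p.1 p.2 h.1 h.2.1 h.2.2).choose else none

lemma shortO_spec {V : Type*} {G : SimpleGraph V} {e : Sym2 V} {p : Detour G × Detour G}
    {w : Detour (G.deleteEdges {e})} (h : shortO e p = some w) :
    w.edge = p.1.edge ∧ (∀ f ∈ w.path.edges, f ∈ p.1.path.edges ∨ f ∈ p.2.path.edges) ∧
      e ∈ p.1.path.edges ∧ p.2.edge = e ∧ p.1.edge ∉ p.2.path.edges := by
  unfold shortO at h
  split_ifs at h with hc
  · obtain ⟨h1, h2⟩ := (detour_shortcut p.1 p.2 hc.1 hc.2.1 hc.2.2).choose_spec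
    cases Option.some_inj.mp h
    exact ⟨h1, h2, hc.1, hc.2.1, hc.2.2⟩

lemma shortO_some {V : Type*} {G : SimpleGraph V} {e : Sym2 V} {p : Detour G × Detour G}
    (h1 : e ∈ p.1.path.edges) (h2 : p.2.edge = e) (h3 : p.1.edge ∉ p.2.path.edges) :
    ∃ w, shortO e p = some w := by
  unfold shortO
  rw [dif_pos ⟨h1, h2, h3⟩]
  exact ⟨_, rfl⟩

lemma finsum_mem_eq_sum_filter' {α : Type*} (g : α → ℝ) (D : Finset α)
    (hD : Function.support g ⊆ ↑D) (p : α → Prop) [DecidablePred p] :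
    ∑ᶠ i ∈ {i | p i}, g i = ∑ i ∈ D.filter p, g i := by
  apply finsum_mem_eq_sum_of_inter_support_eq
  ext i
  simp only [Set.mem_inter_iff, Set.mem_setOf_eq, Finset.coe_filter, Function.mem_support]
  exact ⟨fun ⟨hp, hg⟩ => ⟨⟨hD hg, hp⟩, hg⟩, fun ⟨⟨_, hp⟩, hg⟩ => ⟨hp, hg⟩⟩

lemma sum_option_ite {β : Type*} [DecidableEq β] (F : Finset β) (g : Option β) (t : ℝ) :
    ∑ b ∈ F, (if g = some b then t else 0) = if (∃ w ∈ F, g = some w) then t else 0 := by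
  cases g with
  | none => simp
  | some w =>
    simp only [Option.some.injEq]
    rw [Finset.sum_ite_eq F w (fun _ => t)]
    simp

lemma ite_le_ite0 {p q : Prop} {ip : Decidable p} {iq : Decidable q} {t : ℝ}
    (h : p → q) (ht : 0 ≤ t) :
    (@ite _ p ip t 0) ≤ (@ite _ q iq t 0) := by
  split_ifs with h1 h2
  · exact le_refl _
  · exact absurd (h h1) h2
  · exact ht
  · exact le_refl _

lemma ite0_nonneg {p : Prop} {ip : Decidable p} {t : ℝ} (ht : 0 ≤ t) :
    0 ≤ (@ite _ p ip t 0) := by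
  split_ifs
  · exact ht
  · exact le_refl _

lemma myIteCongr {α : Sort*} {b c : Prop} {ib : Decidable b} {ic : Decidable c} {x y : α}
    (h : b ↔ c) : @ite _ b ib x y = @ite _ c ic x y := by
  have hbc := propext h
  subst hbc
  exact congrArg (fun i => @ite _ b i x y) (Subsingleton.elim ib ic)

lemma myIfPos {α : Sort*} {b : Prop} {ib : Decidable b} {x y : α} (h : b) :
    @ite _ b ib x y = x := @if_pos b ib h α x y

lemma myIfNeg {α : Sort*} {b : Prop} {ib : Decidable b} {x y : α} (h : ¬b) :
    @ite _ b ib x y = y := @if_neg b ib h α x y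

/-- if there is an acyclic charging scheme of value `v` from `G` to a
spanning tree `T`, and `e` is an edge of `G` not in `T`, then there is an acyclic
charging scheme of value `v` from `G − e` to `T`. -/
theorem stmt5 {V : Type*} [Fintype V]
    (G T : SimpleGraph V) (v : ℝ) (x : Detour G → ℝ)
    (hT : IsSpanningTree G T)
    (hx : IsAcyclicScheme G T v x)
    (e : Sym2 V) (heG : e ∈ G.edgeSet) (heT : e ∉ T.edgeSet) :
    ∃ x' : Detour (G.deleteEdges {e}) → ℝ,
      IsAcyclicScheme (G.deleteEdges {e}) T v x' := by
  obtain ⟨⟨hpos, hfin, hout, hnet, htree⟩, hnonT, ord, hord⟩ := hx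
  classical
  set G' := G.deleteEdges {e} with hG'
  set D : Finset (Detour G) := hfin.toFinset with hD
  have hmemD : ∀ d : Detour G, d ∈ D ↔ x d ≠ 0 := fun d => hfin.mem_toFinset
  have hDs : Function.support x ⊆ ↑D := fun d hd => by
    rw [Finset.mem_coe, hmemD]; exact hd
  set c := chargeOut x e with hc
  have hc1 : 1 ≤ c := hout e heG heT
  have hc0 : 0 < c := lt_of_lt_of_le one_pos hc1
  have hauto : ∀ d de : Detour G, x d ≠ 0 → x de ≠ 0 → e ∈ d.path.edges → de.edge = e →
      d.edge ∉ de.path.edges := by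
    intro d de hd hde h1 h2 hmem
    have ha := hord d hd e h1
    have hb := hord de hde d.edge hmem
    rw [h2] at hb
    omega
  set E : Finset (Detour G') :=
    ((D.image (liftO e)) ∪ ((D ×ˢ D).image (shortO e))).preimage some
      ((Option.some_injective _).injOn) with hE
  set x' : Detour G' → ℝ := fun d' =>
    (∑ d ∈ D, if liftO e d = some d' then x d else 0) +
      c⁻¹ * ∑ q ∈ D ×ˢ D, if shortO e q = some d' then x q.1 * x q.2 else 0 with hx'def
  have hx'val : ∀ d', x' d' = (∑ d ∈ D, if liftO e d = some d' then x d else 0) +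
      c⁻¹ * ∑ q ∈ D ×ˢ D, if shortO e q = some d' then x q.1 * x q.2 else 0 := fun d' => rfl
  have hWE : ∀ d ∈ D, ∀ w, liftO e d = some w → w ∈ E := by
    intro d hd w hw
    rw [hE, Finset.mem_preimage]
    apply Finset.mem_union_left
    rw [← hw]
    exact Finset.mem_image_of_mem _ hd
  have hWE2 : ∀ q ∈ D ×ˢ D, ∀ w, shortO e q = some w → w ∈ E := by
    intro q hq w hw
    rw [hE, Finset.mem_preimage]
    apply Finset.mem_union_right
    rw [← hw]
    exact Finset.mem_image_of_mem _ hq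
  have hsource : ∀ d' : Detour G', x' d' ≠ 0 →
      (∃ d ∈ D, liftO e d = some d') ∨ (∃ q ∈ D ×ˢ D, shortO e q = some d') := by
    intro d' hd'
    rw [hx'val d'] at hd'
    by_contra hcon
    push_neg at hcon
    apply hd'
    have hA : (∑ d ∈ D, if liftO e d = some d' then x d else 0) = 0 :=
      Finset.sum_eq_zero fun d hd => if_neg fun hsome => (hcon.1 d hd hsome)
    have hB : (∑ q ∈ D ×ˢ D, if shortO e q = some d' then x q.1 * x q.2 else 0) = 0 :=
      Finset.sum_eq_zero fun q hq => if_neg fun hsome => (hcon.2 q hq hsome)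
    rw [hA, hB, mul_zero, add_zero]
  have hsupp' : Function.support x' ⊆ ↑E := by
    intro d' hd'
    rw [Function.mem_support] at hd'
    rcases hsource d' hd' with ⟨d, hd, hsome⟩ | ⟨q, hq, hsome⟩
    · exact hWE d hd d' hsome
    · exact hWE2 q hq d' hsome
  have hco : ∀ f, chargeOut x f = ∑ d ∈ D.filter (fun d => d.edge = f), x d :=
    fun f => finsum_mem_eq_sum_filter' x D hDs _
  have hci : ∀ f, chargeIn x f = ∑ d ∈ D.filter (fun d => f ∈ d.path.edges), x d :=
    fun f => finsum_mem_eq_sum_filter' x D hDs _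
  have hco' : ∀ f, chargeOut x' f = ∑ d' ∈ E.filter (fun d' => d'.edge = f), x' d' :=
    fun f => finsum_mem_eq_sum_filter' x' E hsupp' _
  have hci' : ∀ f, chargeIn x' f = ∑ d' ∈ E.filter (fun d' => f ∈ d'.path.edges), x' d' :=
    fun f => finsum_mem_eq_sum_filter' x' E hsupp' _
  have hexpand : ∀ (p : Detour G' → Prop) [DecidablePred p],
      ∑ d' ∈ E.filter p, x' d' =
        (∑ d ∈ D, if (∃ w ∈ E.filter p, liftO e d = some w) then x d else 0) +
          c⁻¹ * ∑ q ∈ D ×ˢ D,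
            if (∃ w ∈ E.filter p, shortO e q = some w) then x q.1 * x q.2 else 0 := by
    intro p _
    simp only [hx'val]
    rw [Finset.sum_add_distrib, ← Finset.mul_sum]
    congr 1
    · rw [Finset.sum_comm]
      exact Finset.sum_congr rfl fun d _ => sum_option_ite _ _ _
    · congr 1
      rw [Finset.sum_comm]
      exact Finset.sum_congr rfl fun q _ => sum_option_ite _ _ _
  have hfact : ∀ (c1 c2 : Detour G → Prop) [DecidablePred c1] [DecidablePred c2],
      (∑ q ∈ D ×ˢ D, if c1 q.1 ∧ c2 q.2 then x q.1 * x q.2 else 0) =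
        (∑ d ∈ D.filter c1, x d) * (∑ d ∈ D.filter c2, x d) := by
    intro c1 c2 _ _
    rw [Finset.sum_filter, Finset.sum_filter, Finset.sum_mul_sum, Finset.sum_product]
    refine Finset.sum_congr rfl fun d _ => Finset.sum_congr rfl fun de _ => ?_
    by_cases h1 : c1 d <;> by_cases h2 : c2 de <;> simp [h1, h2]
  have heval : ∀ (p : Detour G' → Prop) [DecidablePred p] (A : Detour G → Prop) [DecidablePred A]
      (B : Detour G × Detour G → Prop) [DecidablePred B],
      (∀ d ∈ D, ((∃ w ∈ E.filter p, liftO e d = some w) ↔ A d)) →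
      (∀ q ∈ D ×ˢ D, ((∃ w ∈ E.filter p, shortO e q = some w) ↔ B q)) →
      ∑ d' ∈ E.filter p, x' d' =
        (∑ d ∈ D, if A d then x d else 0) +
          c⁻¹ * ∑ q ∈ D ×ˢ D, if B q then x q.1 * x q.2 else 0 := by
    intro p _ A _ B _ hA hB
    rw [hexpand p]
    congr 1
    · exact Finset.sum_congr rfl fun d hd => myIteCongr (hA d hd)
    · exact congrArg (c⁻¹ * ·) (Finset.sum_congr rfl fun q hq => myIteCongr (hB q hq))
  -- chargeOut is preserved for f ≠ e
  have hout' : ∀ f, f ≠ e → chargeOut x' f = chargeOut x f := by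
    intro f hfe
    have hA : ∀ d ∈ D, ((∃ w ∈ E.filter (fun d' => d'.edge = f), liftO e d = some w) ↔
        ((e ∉ d.path.edges ∧ d.edge ≠ e) ∧ d.edge = f)) := by
      intro d hd
      constructor
      · rintro ⟨w, hwF, hsome⟩
        obtain ⟨he1, he2, he3, he4⟩ := liftO_spec hsome
        rw [Finset.mem_filter] at hwF
        exact ⟨⟨he3, he4⟩, by rw [← he1]; exact hwF.2⟩
      · rintro ⟨⟨h1, h2⟩, h3⟩
        obtain ⟨w, hw⟩ := liftO_some h1 h2
        refine ⟨w, Finset.mem_filter.mpr ⟨hWE d hd w hw, ?_⟩, hw⟩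
        obtain ⟨he1, -, -, -⟩ := liftO_spec hw
        rw [he1]; exact h3
    have hB : ∀ q ∈ D ×ˢ D, ((∃ w ∈ E.filter (fun d' => d'.edge = f), shortO e q = some w) ↔
        ((e ∈ q.1.path.edges ∧ q.1.edge = f) ∧ (q.2.edge = e))) := by
      intro q hq
      rw [Finset.mem_product] at hq
      constructor
      · rintro ⟨w, hwF, hsome⟩
        obtain ⟨he1, -, he3, he4, -⟩ := shortO_spec hsome
        rw [Finset.mem_filter] at hwF
        exact ⟨⟨he3, by rw [← he1]; exact hwF.2⟩, he4⟩
      · rintro ⟨⟨h1, h3⟩, h2⟩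
        have h4 := hauto q.1 q.2 ((hmemD _).mp hq.1) ((hmemD _).mp hq.2) h1 h2
        obtain ⟨w, hw⟩ := shortO_some h1 h2 h4
        refine ⟨w, Finset.mem_filter.mpr ⟨hWE2 q (Finset.mem_product.mpr hq) w hw, ?_⟩, hw⟩
        obtain ⟨he1, -, -, -, -⟩ := shortO_spec hw
        rw [he1]; exact h3
    rw [hco', heval (fun d' => d'.edge = f)
        (fun d => (e ∉ d.path.edges ∧ d.edge ≠ e) ∧ d.edge = f)
        (fun q => (e ∈ q.1.path.edges ∧ q.1.edge = f) ∧ (q.2.edge = e)) hA hB,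
      hfact (fun d => e ∈ d.path.edges ∧ d.edge = f) (fun de => de.edge = e),
      ← hco e, ← hc, mul_comm _ c, ← mul_assoc, inv_mul_cancel₀ (ne_of_gt hc0), one_mul,
      hco f, Finset.sum_filter, Finset.sum_filter, ← Finset.sum_add_distrib]
    refine Finset.sum_congr rfl fun d hd => ?_
    by_cases h1 : d.edge = f
    · have h2 : d.edge ≠ e := fun hh => hfe (h1.symm.trans hh)
      by_cases h3 : e ∈ d.path.edges <;> simp [h1, h2, h3, hfe]
    · simp [h1]
  have hin' : ∀ f, chargeIn x' f ≤ chargeIn x f := by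
    intro f
    have hA : ∀ d ∈ D, ((∃ w ∈ E.filter (fun d' => f ∈ d'.path.edges), liftO e d = some w) ↔
        ((∃ w ∈ E.filter (fun d' => f ∈ d'.path.edges), liftO e d = some w))) :=
      fun d hd => Iff.rfl
    have hB : ∀ q ∈ D ×ˢ D,
        ((∃ w ∈ E.filter (fun d' => f ∈ d'.path.edges), shortO e q = some w) ↔
        ((∃ w ∈ E.filter (fun d' => f ∈ d'.path.edges), shortO e q = some w))) :=
      fun q hq => Iff.rfl
    rw [hci', heval (fun d' => f ∈ d'.path.edges)
        (fun d => ∃ w ∈ E.filter (fun d' => f ∈ d'.path.edges), liftO e d = some w)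
        (fun q => ∃ w ∈ E.filter (fun d' => f ∈ d'.path.edges), shortO e q = some w) hA hB,
      hci f]
    have b1 : (∑ d ∈ D, if (∃ w ∈ E.filter (fun d' => f ∈ d'.path.edges), liftO e d = some w)
          then x d else 0)
        ≤ ∑ d ∈ D, (if (e ∉ d.path.edges ∧ d.edge ≠ e) ∧ f ∈ d.path.edges
          then x d else 0) := by
      refine Finset.sum_le_sum fun d hd => ite_le_ite0 ?_ (hpos d)
      rintro ⟨w, hwF, hsome⟩
      obtain ⟨he1, he2, he3, he4⟩ := liftO_spec hsome
      rw [Finset.mem_filter] at hwF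
      exact ⟨⟨he3, he4⟩, by rw [← he2]; exact hwF.2⟩
    have b2 : (∑ q ∈ D ×ˢ D, if (∃ w ∈ E.filter (fun d' => f ∈ d'.path.edges),
            shortO e q = some w) then x q.1 * x q.2 else 0)
        ≤ (∑ q ∈ D ×ˢ D, if (e ∈ q.1.path.edges ∧ f ∈ q.1.path.edges) ∧ (q.2.edge = e)
            then x q.1 * x q.2 else 0)
          + (∑ q ∈ D ×ˢ D, if (e ∈ q.1.path.edges) ∧ (q.2.edge = e ∧ f ∈ q.2.path.edges)
            then x q.1 * x q.2 else 0) := by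
      rw [← Finset.sum_add_distrib]
      refine Finset.sum_le_sum fun q hq => ?_
      have hxx : 0 ≤ x q.1 * x q.2 := mul_nonneg (hpos _) (hpos _)
      by_cases hcond : ∃ w ∈ E.filter (fun d' => f ∈ d'.path.edges), shortO e q = some w
      · obtain ⟨w, hwF, hsome⟩ := hcond
        obtain ⟨he1, he2, he3, he4, he5⟩ := shortO_spec hsome
        rw [Finset.mem_filter] at hwF
        have hex : ∃ w ∈ E.filter (fun d' => f ∈ d'.path.edges), shortO e q = some w :=
          ⟨w, Finset.mem_filter.mpr hwF, hsome⟩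
        rcases he2 f hwF.2 with hf1 | hf2
        · rw [myIfPos hex,
            myIfPos (show (e ∈ q.1.path.edges ∧ f ∈ q.1.path.edges) ∧ (q.2.edge = e) from
              ⟨⟨he3, hf1⟩, he4⟩)]
          exact le_add_of_nonneg_right (ite0_nonneg hxx)
        · rw [myIfPos hex,
            myIfPos (show (e ∈ q.1.path.edges) ∧ (q.2.edge = e ∧ f ∈ q.2.path.edges) from
              ⟨he3, he4, hf2⟩)]
          exact le_add_of_nonneg_left (ite0_nonneg hxx)
      · rw [myIfNeg hcond]
        exact add_nonneg (ite0_nonneg hxx) (ite0_nonneg hxx)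
    rw [hfact (fun d => e ∈ d.path.edges ∧ f ∈ d.path.edges) (fun de => de.edge = e),
      hfact (fun d => e ∈ d.path.edges) (fun de => de.edge = e ∧ f ∈ de.path.edges),
      ← hco e, ← hc] at b2
    have hIe : (∑ d ∈ D.filter (fun d => e ∈ d.path.edges), x d) ≤ c := by
      have := hnet e heG heT
      rw [hci e] at this
      linarith
    have hr0 : 0 ≤ ∑ d ∈ D.filter (fun de => de.edge = e ∧ f ∈ de.path.edges), x d :=
      Finset.sum_nonneg fun d _ => hpos d
    have hsum : (∑ d ∈ D, if (e ∉ d.path.edges ∧ d.edge ≠ e) ∧ f ∈ d.path.edges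
          then x d else 0)
        + ((∑ d ∈ D.filter (fun d => e ∈ d.path.edges ∧ f ∈ d.path.edges), x d)
          + (∑ d ∈ D.filter (fun de => de.edge = e ∧ f ∈ de.path.edges), x d))
        ≤ ∑ d ∈ D.filter (fun d => f ∈ d.path.edges), x d := by
      rw [Finset.sum_filter, Finset.sum_filter, Finset.sum_filter,
        ← Finset.sum_add_distrib, ← Finset.sum_add_distrib]
      refine Finset.sum_le_sum fun d hd => ?_
      have hno := d.edge_not_mem_path
      by_cases h1 : f ∈ d.path.edges
      · by_cases h2 : e ∈ d.path.edges
        · have h3 : d.edge ≠ e := fun hh => hno (by rw [hh]; exact h2)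
          simp [h1, h2, h3]
        · by_cases h3 : d.edge = e <;> simp [h1, h2, h3, hpos d]
      · simp [h1]
    have hcinv : c⁻¹ * c = 1 := inv_mul_cancel₀ (ne_of_gt hc0)
    have hmono := mul_le_mul_of_nonneg_left b2 (inv_nonneg.mpr hc0.le)
    have h2 : c⁻¹ * ((∑ d ∈ D.filter (fun d => e ∈ d.path.edges ∧ f ∈ d.path.edges), x d) * c
          + (∑ d ∈ D.filter (fun d => e ∈ d.path.edges), x d)
            * (∑ d ∈ D.filter (fun de => de.edge = e ∧ f ∈ de.path.edges), x d))
        ≤ (∑ d ∈ D.filter (fun d => e ∈ d.path.edges ∧ f ∈ d.path.edges), x d)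
          + (∑ d ∈ D.filter (fun de => de.edge = e ∧ f ∈ de.path.edges), x d) := by
      have h3 : c⁻¹ * (∑ d ∈ D.filter (fun d => e ∈ d.path.edges), x d) ≤ 1 := by
        rw [← hcinv]
        exact mul_le_mul_of_nonneg_left hIe (inv_nonneg.mpr hc0.le)
      have h4 : c⁻¹ * (∑ d ∈ D.filter (fun d => e ∈ d.path.edges), x d)
            * (∑ d ∈ D.filter (fun de => de.edge = e ∧ f ∈ de.path.edges), x d)
          ≤ 1 * (∑ d ∈ D.filter (fun de => de.edge = e ∧ f ∈ de.path.edges), x d) :=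
        mul_le_mul_of_nonneg_right h3 hr0
      calc c⁻¹ * ((∑ d ∈ D.filter (fun d => e ∈ d.path.edges ∧ f ∈ d.path.edges), x d) * c
            + (∑ d ∈ D.filter (fun d => e ∈ d.path.edges), x d)
              * (∑ d ∈ D.filter (fun de => de.edge = e ∧ f ∈ de.path.edges), x d))
          = (∑ d ∈ D.filter (fun d => e ∈ d.path.edges ∧ f ∈ d.path.edges), x d) * (c⁻¹ * c)
            + c⁻¹ * (∑ d ∈ D.filter (fun d => e ∈ d.path.edges), x d)
              * (∑ d ∈ D.filter (fun de => de.edge = e ∧ f ∈ de.path.edges), x d) := by ring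
        _ ≤ (∑ d ∈ D.filter (fun d => e ∈ d.path.edges ∧ f ∈ d.path.edges), x d)
            + (∑ d ∈ D.filter (fun de => de.edge = e ∧ f ∈ de.path.edges), x d) := by
            rw [hcinv, mul_one]
            linarith
    linarith
  -- assemble the scheme
  refine ⟨x', ⟨⟨?_, ?_, ?_, ?_, ?_⟩, ?_, ord, ?_⟩⟩
  · intro d'
    rw [hx'val]
    refine add_nonneg (Finset.sum_nonneg fun d _ => ite0_nonneg (hpos d))
      (mul_nonneg (inv_nonneg.mpr hc0.le)
        (Finset.sum_nonneg fun q _ => ite0_nonneg (mul_nonneg (hpos _) (hpos _))))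
  · exact E.finite_toSet.subset hsupp'
  · intro f hfG' hfT
    rw [edgeSet_deleteEdges, Set.mem_diff, Set.mem_singleton_iff] at hfG'
    rw [hout' f hfG'.2]
    exact hout f hfG'.1 hfT
  · intro f hfG' hfT
    rw [edgeSet_deleteEdges, Set.mem_diff, Set.mem_singleton_iff] at hfG'
    rw [hout' f hfG'.2]
    linarith [hin' f, hnet f hfG'.1 hfT]
  · intro f hfT
    have hfe : f ≠ e := fun h => heT (h ▸ hfT)
    rw [hout' f hfe]
    linarith [hin' f, htree f hfT]
  · intro d' hd'
    rcases hsource d' hd' with ⟨d, hd, hsome⟩ | ⟨q, hq, hsome⟩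
    · obtain ⟨he1, -, -, -⟩ := liftO_spec hsome
      rw [he1]
      exact hnonT d ((hmemD d).mp hd)
    · obtain ⟨he1, -, -, -, -⟩ := shortO_spec hsome
      rw [he1]
      exact hnonT q.1 ((hmemD _).mp (Finset.mem_product.mp hq).1)
  · intro d' hd' f hf
    rcases hsource d' hd' with ⟨d, hd, hsome⟩ | ⟨q, hq, hsome⟩
    · obtain ⟨he1, he2, -, -⟩ := liftO_spec hsome
      rw [he1]
      exact hord d ((hmemD d).mp hd) f (he2 ▸ hf)
    · obtain ⟨he1, he2, he3, he4, -⟩ := shortO_spec hsome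
      rw [Finset.mem_product] at hq
      rw [he1]
      rcases he2 f hf with h | h
      · exact hord q.1 ((hmemD _).mp hq.1) f h
      · have t1 := hord q.1 ((hmemD _).mp hq.1) e he3
        have t2 := hord q.2 ((hmemD _).mp hq.2) f h
        rw [he4] at t2
        omega
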